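/- arXiv:2408.12486 — 4 statements merged into one kernel-verified Lean document; each statement's English description precedes it below -/
import Mathlib

section
/- Let K be a group, N a normal subgroup of K, and f an automorphism of K such that f(y) = y for every y ∈ N. Suppose there exist elements a₁, a₂ ∈ K and positive integers n₁, n₂ such that a₁^{n₁} ∈ N and a₂^{n₂} ∈ N, the normalizer in K of the cyclic subgroup generated by a_i^{n_i} is contained in the cyclic subgroup generated by a_i (for i = 1, 2), and the cyclic subgroups generated by a₁ and by a₂ intersect trivially. Then f is the identity automorphism of K. -/
/-- Group-theoretic core of Lemma 3.2 ("restriction"): an automorphism of a group `K`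
that restricts to the identity on a normal subgroup `N` containing suitable powers of
two elements whose cyclic subgroups have small normalizers and trivial intersection
must be the identity. -/
theorem auto_fixing_normal_subgroup_is_id
    {K : Type*} [Group K] (N : Subgroup K) [N.Normal]
    (f : K ≃* K) (hf : ∀ y ∈ N, f y = y)
    (a₁ a₂ : K) (n₁ n₂ : ℕ) (hn₁ : 0 < n₁) (hn₂ : 0 < n₂)
    (ha₁ : a₁ ^ n₁ ∈ N) (ha₂ : a₂ ^ n₂ ∈ N)
    (hnorm₁ : Subgroup.normalizer (Subgroup.zpowers (a₁ ^ n₁) : Set K) ≤ Subgroup.zpowers a₁)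
    (hnorm₂ : Subgroup.normalizer (Subgroup.zpowers (a₂ ^ n₂) : Set K) ≤ Subgroup.zpowers a₂)
    (hinter : Subgroup.zpowers a₁ ⊓ Subgroup.zpowers a₂ = ⊥) :
    ∀ x : K, f x = x := by
  intro x
  set g := x⁻¹ * f x with hg
  have key : ∀ (a : K) (n : ℕ), a ^ n ∈ N → g * a ^ n * g⁻¹ = a ^ n := by
    intro a n haN
    have h1 : x * a ^ n * x⁻¹ ∈ N := Subgroup.Normal.conj_mem ‹N.Normal› _ haN x
    have h2 : f (x * a ^ n * x⁻¹) = x * a ^ n * x⁻¹ := hf _ h1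
    have h3 : f x * a ^ n * (f x)⁻¹ = x * a ^ n * x⁻¹ := by
      simpa [map_mul, hf _ haN] using h2
    have := congrArg (fun z => x⁻¹ * z * x) h3
    simp only [hg]
    group
    group at this
    simpa using this
  have memz : ∀ (a : K) (n : ℕ),
      a ^ n ∈ N → Subgroup.normalizer (Subgroup.zpowers (a ^ n) : Set K) ≤ Subgroup.zpowers a →
      g ∈ Subgroup.zpowers a := by
    intro a n haN hnorm
    have conjpow : ∀ k : ℤ, g * (a ^ n) ^ k * g⁻¹ = (a ^ n) ^ k := by
      intro k
      rw [← conj_zpow, key a n haN]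
    have conjpow' : ∀ k : ℤ, g⁻¹ * (a ^ n) ^ k * g = (a ^ n) ^ k := by
      intro k
      have := congrArg (fun z => g⁻¹ * z * g) (conjpow k)
      rw [← this]; group
    apply hnorm
    rw [Subgroup.mem_normalizer_iff]
    intro h
    constructor
    · rintro ⟨k, rfl⟩
      exact ⟨k, (conjpow k).symm⟩
    · rintro ⟨k, hk⟩
      refine ⟨k, ?_⟩
      simp only at hk
      have : h = g⁻¹ * (a ^ n) ^ k * g := by rw [hk]; group
      rw [this, conjpow' k]
  have hg1 : g ∈ Subgroup.zpowers a₁ := memz a₁ n₁ ha₁ hnorm₁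
  have hg2 : g ∈ Subgroup.zpowers a₂ := memz a₂ n₂ ha₂ hnorm₂
  have : g ∈ (⊥ : Subgroup K) := hinter ▸ ⟨hg1, hg2⟩
  have hgone : g = 1 := Subgroup.mem_bot.mp this
  have := hgone
  rw [hg] at this
  calc f x = x * (x⁻¹ * f x) := by group
    _ = x := by rw [this, mul_one]
end

section
/- Let K be a profinite group (a compact, Hausdorff, totally disconnected topological group), N an open normal subgroup of K, and f a continuous automorphism of K such that f(y) = y for every y ∈ N. Suppose there exist elements a₁, a₂ ∈ K such that: (i) for every positive integer n and each i = 1, 2, the normalizer in K of the topological closure of the cyclic subgroup generated by a_i^{n} is contained in the topological closure of the cyclic subgroup generated by a_i; and (ii) the topological closures of the cyclic subgroups generated by a₁ and by a₂ intersect trivially. Then f is the identity automorphism of K. -/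
private lemma aux_mem_closure_zpowers
    {K : Type*} [Group K] [TopologicalSpace K] [IsTopologicalGroup K] [T2Space K]
    {a d : K} {n : ℕ} (hn : 0 < n)
    (hnorm : Subgroup.normalizer (((Subgroup.zpowers (a ^ n)).topologicalClosure : Subgroup K) : Set K) ≤
        (Subgroup.zpowers a).topologicalClosure)
    (hcomm : a ^ n * d = d * a ^ n) :
    d ∈ (Subgroup.zpowers a).topologicalClosure := by
  apply hnorm
  -- the closure of ⟨aⁿ⟩ is contained in the centralizer of d
  have hclosed : IsClosed (Subgroup.centralizer {d} : Set K) := by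
    have : (Subgroup.centralizer {d} : Set K) = {z | d * z = z * d} := by
      ext z; simp [Subgroup.mem_centralizer_iff]
    rw [this]
    exact isClosed_eq (continuous_const.mul continuous_id) (continuous_id.mul continuous_const)
  have hle : (Subgroup.zpowers (a ^ n)).topologicalClosure ≤ Subgroup.centralizer {d} := by
    apply Subgroup.topologicalClosure_minimal _ _ hclosed
    rw [Subgroup.zpowers_le]
    simpa [Subgroup.mem_centralizer_iff] using hcomm.symm
  -- hence d normalizes it
  rw [Subgroup.mem_normalizer_iff]
  intro h
  constructor
  · intro hh
    have hcd : d * h = h * d := by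
      have := hle hh
      simpa [Subgroup.mem_centralizer_iff] using this
    have : d * h * d⁻¹ = h := by rw [hcd, mul_inv_cancel_right]
    rwa [this]
  · intro hh
    have hcd : d * (d * h * d⁻¹) = (d * h * d⁻¹) * d := by
      have := hle hh
      simpa [Subgroup.mem_centralizer_iff] using this
    have heq : d * h * d⁻¹ = h := by
      have h2 : d * (d * h * d⁻¹) = d * h := by rw [hcd]; group
      exact mul_left_cancel h2
    rwa [heq] at hh

/-- Profinite version of Lemma 3.2 ("restriction"): a continuous automorphism of a
profinite group `K` that restricts to the identity on an open normal subgroup `N`,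
where `a₁, a₂` are elements whose procyclic closures have trivial intersection and
the normalizer of the closure of `⟨aᵢⁿ⟩` is contained in the closure of `⟨aᵢ⟩`,
must be the identity. -/
theorem profinite_auto_fixing_open_normal_subgroup_is_id
    {K : Type*} [Group K] [TopologicalSpace K] [IsTopologicalGroup K]
    [CompactSpace K] [T2Space K] [TotallyDisconnectedSpace K]
    (N : Subgroup K) [N.Normal] (hNopen : IsOpen (N : Set K))
    (f : K ≃* K) (hfcont : Continuous f) (hf : ∀ y ∈ N, f y = y)
    (a₁ a₂ : K)
    (hnorm₁ : ∀ n : ℕ, 0 < n →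
      Subgroup.normalizer (((Subgroup.zpowers (a₁ ^ n)).topologicalClosure : Subgroup K) : Set K) ≤
        (Subgroup.zpowers a₁).topologicalClosure)
    (hnorm₂ : ∀ n : ℕ, 0 < n →
      Subgroup.normalizer (((Subgroup.zpowers (a₂ ^ n)).topologicalClosure : Subgroup K) : Set K) ≤
        (Subgroup.zpowers a₂).topologicalClosure)
    (hinter : (Subgroup.zpowers a₁).topologicalClosure ⊓
        (Subgroup.zpowers a₂).topologicalClosure = ⊥) :
    ∀ x : K, f x = x := by
  -- N has finite index since it is open and K compact
  have hfin : Finite (K ⧸ N) := Subgroup.quotient_finite_of_isOpen N hNopen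
  have hidx : N.index ≠ 0 := Subgroup.index_ne_zero_of_finite
  obtain ⟨n₁, hn₁, -, hmem₁⟩ := Subgroup.exists_pow_mem_of_index_ne_zero hidx a₁
  obtain ⟨n₂, hn₂, -, hmem₂⟩ := Subgroup.exists_pow_mem_of_index_ne_zero hidx a₂
  intro x
  -- d := x⁻¹ * f x centralizes N
  have hcent : ∀ y ∈ N, y * (x⁻¹ * f x) = (x⁻¹ * f x) * y := by
    intro y hy
    have hconj : x * y * x⁻¹ ∈ N := by
      simpa [mul_assoc] using Subgroup.Normal.conj_mem ‹N.Normal› y hy x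
    have h1 : f (x * y * x⁻¹) = x * y * x⁻¹ := hf _ hconj
    have h2 : f (x * y * x⁻¹) = f x * y * (f x)⁻¹ := by
      rw [map_mul, map_mul, map_inv, hf y hy]
    have h3 : f x * y * (f x)⁻¹ = x * y * x⁻¹ := by rw [← h2, h1]
    calc y * (x⁻¹ * f x) = x⁻¹ * (x * y * x⁻¹) * f x := by group
      _ = x⁻¹ * (f x * y * (f x)⁻¹) * f x := by rw [h3]
      _ = (x⁻¹ * f x) * y := by group
  have hd1 : x⁻¹ * f x ∈ (Subgroup.zpowers a₁).topologicalClosure :=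
    aux_mem_closure_zpowers hn₁ (hnorm₁ n₁ hn₁) (hcent _ hmem₁)
  have hd2 : x⁻¹ * f x ∈ (Subgroup.zpowers a₂).topologicalClosure :=
    aux_mem_closure_zpowers hn₂ (hnorm₂ n₂ hn₂) (hcent _ hmem₂)
  have hmem : x⁻¹ * f x ∈ (⊥ : Subgroup K) := hinter ▸ Subgroup.mem_inf.mpr ⟨hd1, hd2⟩
  have hd_one : x⁻¹ * f x = 1 := Subgroup.mem_bot.mp hmem
  calc f x = x * (x⁻¹ * f x) := by group
    _ = x := by rw [hd_one, mul_one]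
end

section
/- Let A be a finitely generated abelian group, B a subgroup of A, and C a subgroup of B of finite index in B. Then there exists a subgroup D of A of finite index in A such that D ∩ B ≤ C. Consequently, the profinite topology of A induces on B its full profinite topology. -/
open scoped DirectSum

/-- In a finitely generated commutative group there is a torsion-free subgroup of
finite index. -/
lemma exists_finiteIndex_torsionFree (G : Type*) [CommGroup G] [Group.FG G] :
    ∃ K : Subgroup G, K.FiniteIndex ∧ ∀ g ∈ K, IsOfFinOrder g → g = 1 := by
  classical
  obtain ⟨n, ι, fι, p, hp, e, ⟨f⟩⟩ :=
    AddCommGroup.equiv_free_prod_directSum_zmod (Additive G)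
  haveI : ∀ i : ι, NeZero (p i ^ e i) := fun i =>
    ⟨pow_ne_zero _ (hp i).ne_zero⟩
  haveI : Finite (⨁ i : ι, ZMod (p i ^ e i)) :=
    Finite.of_equiv _ DFinsupp.equivFunOnFintype.symm
  set φ : Additive G →+ ⨁ i : ι, ZMod (p i ^ e i) :=
    (AddMonoidHom.snd _ _).comp f.toAddMonoidHom with hφ
  let ψ : G →* Multiplicative (⨁ i : ι, ZMod (p i ^ e i)) :=
    MonoidHom.mk' (fun g => Multiplicative.ofAdd (φ (Additive.ofMul g)))
      (fun a b => by simp [map_add])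
  refine ⟨ψ.ker, inferInstance, ?_⟩
  rintro g hg hfo
  obtain ⟨m, hm, hgm⟩ := isOfFinOrder_iff_pow_eq_one.mp hfo
  have hψ : (f (Additive.ofMul g)).2 = 0 := hg
  have h2 : m • f (Additive.ofMul g) = 0 := by
    have h : f (Additive.ofMul (g ^ m)) = 0 := by rw [hgm]; simp
    rwa [ofMul_pow, map_nsmul] at h
  have h3 : (f (Additive.ofMul g)).1 = 0 := by
    have h := congrArg Prod.fst h2
    simp only [Prod.smul_fst, Prod.fst_zero] at h
    have h' : (m : ℤ) • (f (Additive.ofMul g)).1 = 0 := by rwa [natCast_zsmul]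
    rcases smul_eq_zero.mp h' with h | h
    · exact absurd h (by exact_mod_cast hm.ne')
    · exact h
  have h0 : f (Additive.ofMul g) = 0 := Prod.ext h3 hψ
  have hg0 : Additive.ofMul g = 0 := by
    apply f.injective; rw [h0, map_zero]
  exact ofMul_eq_zero.mp hg0

/-- Every finite-index subgroup `C` of a subgroup `B` of a finitely generated abelian
group `A` is the trace on `B` of a finite-index subgroup `D` of `A`: the profinite
topology of `A` induces on `B` its full profinite topology. -/
theorem fg_abelian_profinite_topology_induces_on_subgroup
    {A : Type*} [CommGroup A] [Group.FG A]
    (B C : Subgroup A) (hCB : C ≤ B)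
    (hfin : (C.subgroupOf B).FiniteIndex) :
    ∃ D : Subgroup A, D.FiniteIndex ∧ D ⊓ B ≤ C := by
  set n := (C.subgroupOf B).index with hn
  have hn0 : n ≠ 0 := hfin.index_ne_zero
  haveI : C.Normal := inferInstance
  haveI : Group.FG (A ⧸ C) := by
    exact Group.fg_of_surjective (QuotientGroup.mk'_surjective C)
  obtain ⟨K, hKfin, hKtf⟩ := exists_finiteIndex_torsionFree (A ⧸ C)
  refine ⟨K.comap (QuotientGroup.mk' C), ?_, ?_⟩
  · constructor
    rw [Subgroup.index_comap_of_surjective _ (QuotientGroup.mk'_surjective C)]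
    exact hKfin.index_ne_zero
  · rintro a ⟨haD, haB⟩
    have hfo : IsOfFinOrder ((QuotientGroup.mk' C) a) := by
      refine isOfFinOrder_iff_pow_eq_one.mpr ⟨n, Nat.pos_of_ne_zero hn0, ?_⟩
      rw [← map_pow]
      have : (⟨a, haB⟩ : B) ^ n ∈ C.subgroupOf B := Subgroup.pow_index_mem _ _
      have haC : a ^ n ∈ C := by
        simpa [Subgroup.mem_subgroupOf] using this
      exact (QuotientGroup.eq_one_iff _).mpr haC
    have := hKtf _ haD hfo
    rwa [← QuotientGroup.eq_one_iff a]
end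

section
/- Let A be a finitely generated abelian group endowed with an action of a finite group G by group automorphisms, and let A^G = {a ∈ A : g·a = a for all g ∈ G} be the subgroup of G-invariants. Then for every subgroup C of A^G of finite index in A^G, there exists a G-invariant subgroup D of A of finite index in A such that D ∩ A^G ≤ C. -/
open Pointwise


/-- Any subgroup of a finitely generated commutative group is finitely generated. -/
private lemma aux_subgroup_fg_of_comm {Q : Type*} [CommGroup Q] [Group.FG Q] (T : Subgroup Q) :
    Group.FG T := by
  rw [Group.fg_iff_subgroup_fg, Subgroup.fg_iff_add_fg]
  haveI : Module.Finite ℤ (Additive Q) := Module.Finite.iff_addGroup_fg.mpr inferInstance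
  haveI : IsNoetherian ℤ (Additive Q) := isNoetherian_of_isNoetherianRing_of_finite ℤ _
  have h := IsNoetherian.noetherian (AddSubgroup.toIntSubmodule T.toAddSubgroup)
  exact (Submodule.fg_iff_addSubgroup_fg _).mp h

/-- For a finitely generated abelian group `A` with an action of a finite group `G` by
automorphisms, every finite-index subgroup `C` of the invariants `A^G` is the trace on
`A^G` of a `G`-invariant finite-index subgroup `D` of `A`. -/
theorem invariants_finite_index_trace
    {A : Type*} [CommGroup A] [Group.FG A]
    {G : Type*} [Group G] [Finite G] [MulDistribMulAction G A]
    (AG : Subgroup A) (hAG : ∀ a : A, a ∈ AG ↔ ∀ g : G, g • a = a)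
    (C : Subgroup A) (hCAG : C ≤ AG)
    (hfin : (C.subgroupOf AG).FiniteIndex) :
    ∃ D : Subgroup A, (∀ g : G, g • (D : Set A) = (D : Set A)) ∧
      D.FiniteIndex ∧ D ⊓ AG ≤ C := by
  classical
  -- the torsion subgroup of the quotient `A ⧸ C` is finite
  let T : Subgroup (A ⧸ C) := CommGroup.torsion (A ⧸ C)
  haveI : Group.FG T := aux_subgroup_fg_of_comm T
  have hTtor : Monoid.IsTorsion T := by
    rintro ⟨x, hx⟩
    obtain ⟨m, hm, hxm⟩ := (isOfFinOrder_iff_pow_eq_one).mp hx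
    exact (isOfFinOrder_iff_pow_eq_one).mpr ⟨m, hm, by ext; simpa using hxm⟩
  haveI : Finite T := CommGroup.finite_of_fg_torsion _ hTtor
  set n : ℕ := Monoid.exponent T with hn
  have hn0 : n ≠ 0 := Monoid.exponent_ne_zero_of_finite
  -- the subgroup generated by `C` and `n`-th powers
  set D₀ : Subgroup A := C ⊔ (powMonoidHom n : A →* A).range with hD₀
  -- `D₀` has finite index
  haveI hR : (powMonoidHom n : A →* A).range.FiniteIndex := by
    have htor : Monoid.IsTorsion (A ⧸ (powMonoidHom n : A →* A).range) := by
      intro x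
      induction x using QuotientGroup.induction_on with
      | H a =>
        refine (isOfFinOrder_iff_pow_eq_one).mpr ⟨n, Nat.pos_of_ne_zero hn0, ?_⟩
        rw [← QuotientGroup.mk_pow, QuotientGroup.eq_one_iff]
        exact ⟨a, rfl⟩
    haveI : Finite (A ⧸ (powMonoidHom n : A →* A).range) :=
      CommGroup.finite_of_fg_torsion _ htor
    exact Subgroup.finiteIndex_of_finite_quotient
  have hD₀fin : D₀.FiniteIndex := Subgroup.finiteIndex_of_le le_sup_right
  -- key: `D₀ ⊓ AG ≤ C`
  have hkey : D₀ ⊓ AG ≤ C := by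
    rintro a ⟨haD, haAG⟩
    obtain ⟨c, hc, -, ⟨b, rfl⟩, rfl⟩ := Subgroup.mem_sup.mp haD
    -- image of `a` in `A ⧸ C` is torsion since `a ∈ AG` and `C` has finite index in `AG`
    set k : ℕ := (C.subgroupOf AG).index with hk
    have hk0 : k ≠ 0 := hfin.index_ne_zero
    have hak : (c * powMonoidHom n b) ^ k ∈ C := by
      have := Subgroup.pow_index_mem (C.subgroupOf AG) ⟨c * powMonoidHom n b, haAG⟩
      simpa [Subgroup.mem_subgroupOf, ← hk] using this
    -- hence `mk b` is torsion in `A ⧸ C`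
    have hmk : ((c * powMonoidHom n b : A) : A ⧸ C) = ((b : A ⧸ C)) ^ n := by
      rw [QuotientGroup.mk_mul, (QuotientGroup.eq_one_iff c).mpr hc, one_mul,
        powMonoidHom_apply, QuotientGroup.mk_pow]
    have hbtor : (b : A ⧸ C) ∈ T := by
      refine (isOfFinOrder_iff_pow_eq_one).mpr ⟨n * k, ?_, ?_⟩
      · exact Nat.pos_of_ne_zero (mul_ne_zero hn0 hk0)
      · rw [pow_mul, ← hmk, ← QuotientGroup.mk_pow, QuotientGroup.eq_one_iff]
        exact hak
    -- so `mk b ^ n = 1` since `n` is the exponent of the torsion subgroup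
    have hbn : ((b : A ⧸ C)) ^ n = 1 := by
      have := Monoid.pow_exponent_eq_one (⟨(b : A ⧸ C), hbtor⟩ : T)
      rw [← hn] at this
      simpa using congrArg (Subtype.val) this
    rw [← QuotientGroup.eq_one_iff, hmk, hbn]
  -- make it `G`-invariant by intersecting the translates
  refine ⟨⨅ g : G, g • D₀, ?_, ?_, ?_⟩
  · -- invariance
    have hle : ∀ g : G, g • (⨅ h : G, h • D₀) ≤ ⨅ h : G, h • D₀ := by
      intro g
      refine le_iInf fun h => ?_
      have : (⨅ h : G, h • D₀) ≤ (g⁻¹ * h) • D₀ := iInf_le _ _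
      calc g • (⨅ h : G, h • D₀) ≤ g • ((g⁻¹ * h) • D₀) :=
            (Subgroup.pointwise_smul_le_pointwise_smul_iff).mpr this
        _ = h • D₀ := by rw [smul_smul, mul_inv_cancel_left]
    intro g
    have heq : g • (⨅ h : G, h • D₀) = ⨅ h : G, h • D₀ := by
      refine le_antisymm (hle g) ?_
      have := hle g⁻¹
      calc (⨅ h : G, h • D₀) = g • g⁻¹ • (⨅ h : G, h • D₀) := by rw [smul_smul]; simp
        _ ≤ g • (⨅ h : G, h • D₀) :=
            (Subgroup.pointwise_smul_le_pointwise_smul_iff).mpr this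
    rw [← Subgroup.coe_pointwise_smul, heq]
  · -- finite index
    refine Subgroup.finiteIndex_iInf fun g => ?_
    have : g • D₀ = D₀.comap ((MulDistribMulAction.toMulEquiv A g).symm : A →* A) := by
      rw [Subgroup.pointwise_smul_def]
      exact Subgroup.map_equiv_eq_comap_symm (MulDistribMulAction.toMulEquiv A g) D₀
    rw [this]
    constructor
    rw [Subgroup.index_comap_of_surjective _ (MulEquiv.surjective _)]
    exact hD₀fin.index_ne_zero
  · -- trace
    refine le_trans ?_ hkey
    exact inf_le_inf_right AG (le_trans (iInf_le _ (1 : G)) (by rw [one_smul]))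
end
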